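/- In the Gaussian conjugate model, conditional on ȳ_n and μ, the squared Wasserstein distance W₂(π_m^f, π_n^c) is distributed as τ_m·χ²₁(λ_m/τ_m) + c_m², where c_m² = (σ/√(n+z) - σ/√m)², τ_m = (r/m²)σ², r = m - n, and λ_m = ((z/(n+z) - r/m)(ȳ_n - μ) + (1 - w_n)(μ - μ₀))², with w_n = n/(n+z). -/

import Mathlib

open MeasureTheory ProbabilityTheory

lemma sq_add_map_abs (a c : ℝ) (v : NNReal) :
    (gaussianReal a v).map (fun x : ℝ => x ^ 2 + c)
      = (gaussianReal |a| v).map (fun x : ℝ => x ^ 2 + c) := by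
  rcases abs_cases a with ⟨h, _⟩ | ⟨h, _⟩
  · rw [h]
  · rw [h]
    have hneg : gaussianReal (-a) v = (gaussianReal a v).map (fun x : ℝ => (-1 : ℝ) * x) := by
      rw [gaussianReal_map_const_mul]
      norm_num
    rw [hneg, Measure.map_map (by fun_prop) (by fun_prop)]
    congr 1
    ext x
    simp only [Function.comp_apply]
    ring

/-- Lemma 2, first part: conditional on `ȳ_n` and `μ`, the squared
Wasserstein distance `W₂²(π_m^f, π_n^c) = (μ_n - (n/m)ȳ_n - (r/m)s̄_r)² + c_m²`
(with `s̄_r ~ N(μ, σ²/r)`) is distributed as `τ_m · χ²₁(λ_m/τ_m) + c_m²`, where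
`c_m² = (σ/√(n+z) - σ/√m)²`, `τ_m = (r/m²)σ²`, `r = m - n`,
`λ_m = ((z/(n+z) - r/m)(ȳ_n - μ) + (1-w_n)(μ - μ₀))²`, `w_n = n/(n+z)`.
Here the noncentral `χ²₁(δ)` variable is realized as `Z²` with `Z ~ N(√δ, 1)`. -/
theorem stmt_8 (n r z σ μ ybar μ₀ : ℝ) (hn : 0 < n) (hr : 0 < r) (hz : 0 < z)
    (hσ : 0 < σ)
    (m : ℝ) (hm : m = n + r)
    (wn : ℝ) (hwn : wn = n / (n + z))
    (μn : ℝ) (hμn : μn = wn * ybar + (1 - wn) * μ₀)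
    (cm2 : ℝ) (hcm2 : cm2 = (σ / Real.sqrt (n + z) - σ / Real.sqrt m) ^ 2)
    (τm : ℝ) (hτm : τm = (r / m ^ 2) * σ ^ 2)
    (lamm : ℝ)
    (hlamm : lamm = ((z / (n + z) - r / m) * (ybar - μ) + (1 - wn) * (μ - μ₀)) ^ 2) :
    (gaussianReal μ (Real.toNNReal (σ ^ 2 / r))).map
        (fun s : ℝ => (μn - (n / m) * ybar - (r / m) * s) ^ 2 + cm2)
      = (gaussianReal (Real.sqrt (lamm / τm)) 1).map
        (fun t : ℝ => τm * t ^ 2 + cm2) := by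
  have hm0 : 0 < m := by rw [hm]; linarith
  have hnz : 0 < n + z := by linarith
  have hτ0 : 0 < τm := by rw [hτm]; positivity
  set a : ℝ := μn - (n / m) * ybar - (r / m) * μ with ha
  have ha2 : a ^ 2 = lamm := by
    rw [ha, hlamm, hμn, hwn]
    have h1 : z / (n + z) = 1 - n / (n + z) := by field_simp; ring
    have h2 : r / m = 1 - n / m := by field_simp; linarith [hm]
    rw [h1, h2]
    ring
  -- LHS
  have hcomp : (fun s : ℝ => (μn - (n / m) * ybar - (r / m) * s) ^ 2 + cm2)
      = (fun x : ℝ => x ^ 2 + cm2) ∘ ((fun x : ℝ => x + (μn - (n / m) * ybar))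
        ∘ (fun s : ℝ => (-(r / m)) * s)) := by
    ext s; simp only [Function.comp_apply]; ring
  have hvar : ((NNReal.mk ((-(r / m)) ^ 2) (sq_nonneg _) * Real.toNNReal (σ ^ 2 / r) : NNReal))
      = Real.toNNReal τm := by
    ext
    push_cast
    rw [Real.coe_toNNReal _ (by positivity), Real.coe_toNNReal _ (le_of_lt hτ0), hτm]
    field_simp
  have hL : (gaussianReal μ (Real.toNNReal (σ ^ 2 / r))).map
      (fun s : ℝ => (μn - (n / m) * ybar - (r / m) * s) ^ 2 + cm2)
      = (gaussianReal a (Real.toNNReal τm)).map (fun x : ℝ => x ^ 2 + cm2) := by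
    rw [hcomp, ← Measure.map_map (by fun_prop) (by fun_prop),
      ← Measure.map_map (by fun_prop : Measurable (fun x : ℝ => x + (μn - (n / m) * ybar)))
        (by fun_prop),
      gaussianReal_map_const_mul, gaussianReal_map_add_const, hvar]
    congr 2
    rw [ha]; ring
  -- RHS
  have hcompR : (fun t : ℝ => τm * t ^ 2 + cm2)
      = (fun x : ℝ => x ^ 2 + cm2) ∘ (fun t : ℝ => Real.sqrt τm * t) := by
    ext t
    simp only [Function.comp_apply, mul_pow, Real.sq_sqrt (le_of_lt hτ0)]
  have hvarR : ((NNReal.mk ((Real.sqrt τm) ^ 2) (sq_nonneg _) * 1 : NNReal)) = Real.toNNReal τm := by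
    ext
    push_cast
    rw [Real.sq_sqrt (le_of_lt hτ0), mul_one]
    exact (Real.coe_toNNReal τm (le_of_lt hτ0)).symm
  have hmean : Real.sqrt τm * Real.sqrt (lamm / τm) = |a| := by
    rw [← Real.sqrt_mul (le_of_lt hτ0), mul_div_cancel₀ _ (ne_of_gt hτ0), ← ha2,
      Real.sqrt_sq_eq_abs]
  have hR : (gaussianReal (Real.sqrt (lamm / τm)) 1).map (fun t : ℝ => τm * t ^ 2 + cm2)
      = (gaussianReal |a| (Real.toNNReal τm)).map (fun x : ℝ => x ^ 2 + cm2) := by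
    rw [hcompR, ← Measure.map_map (by fun_prop) (by fun_prop),
      gaussianReal_map_const_mul, hvarR, hmean]
  rw [hL, hR, sq_add_map_abs]
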